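/- If there is a tree-like resolution derivation of a clause C of length L in which at most the root (final clause) is a merge, then there is an input resolution derivation from the same set of axioms of some clause C' ⊆ C of length at most L. -/

import Mathlib

open Finset

abbrev Lit (V : Type) := V × Bool
abbrev Clause (V : Type) := Finset (Lit V)

def Lit.negate {V : Type} (l : Lit V) : Lit V := (l.1, !l.2)

/-- Justification of a proof line: `none` = axiom; `Sum.inl (i,j,x)` = resolution of
lines `i,j` on pivot variable `x`; `Sum.inr i` = weakening of line `i`. -/
abbrev Just (V : Type) := (ℕ × ℕ × V) ⊕ ℕ

structure Deriv (V : Type) where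
  lines : List (Clause V × Option (Just V))

namespace Deriv

variable {V : Type} [DecidableEq V]

def length (π : Deriv V) : ℕ := π.lines.length

def clause (π : Deriv V) (i : ℕ) : Clause V := (π.lines.getD i (∅, none)).1

def just (π : Deriv V) (i : ℕ) : Option (Just V) := (π.lines.getD i (∅, none)).2

def lastClause (π : Deriv V) : Clause V := π.clause (π.length - 1)

def resolve (A B : Clause V) (x : V) : Clause V := A.erase (x, true) ∪ B.erase (x, false)

def ValidLine (Ax : Set (Clause V)) (w : Bool) (π : Deriv V) (k : ℕ) : Prop :=
  match π.just k with
  | none => π.clause k ∈ Ax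
  | some (Sum.inl (i, j, x)) =>
      i < k ∧ j < k ∧ (x, true) ∈ π.clause i ∧ (x, false) ∈ π.clause j ∧
        π.clause k = resolve (π.clause i) (π.clause j) x
  | some (Sum.inr i) => w = true ∧ i < k ∧ π.clause i ⊆ π.clause k

/-- valid resolution derivation (no weakening) from axiom set `Ax` -/
def Valid (Ax : Set (Clause V)) (π : Deriv V) : Prop :=
  0 < π.length ∧ ∀ k < π.length, ValidLine Ax false π k

/-- valid resolution derivation with weakening allowed -/
def ValidW (Ax : Set (Clause V)) (π : Deriv V) : Prop :=
  0 < π.length ∧ ∀ k < π.length, ValidLine Ax true π k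

/-- line `k` is a resolution step whose two premises share a literal besides the pivot -/
def IsMergeLine (π : Deriv V) (k : ℕ) : Prop :=
  ∃ i j x, π.just k = some (Sum.inl (i, j, x)) ∧
    ∃ l, l ∈ (π.clause i).erase (x, true) ∧ l ∈ (π.clause j).erase (x, false)

def IsAxiomLine (π : Deriv V) (k : ℕ) : Prop := k < π.length ∧ π.just k = none

def IsParent (π : Deriv V) (i k : ℕ) : Prop :=
  (∃ j x, π.just k = some (Sum.inl (i, j, x)) ∨ π.just k = some (Sum.inl (j, i, x))) ∨
    π.just k = some (Sum.inr i)

/-- reachability in the proof DAG -/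
inductive Reaches (π : Deriv V) : ℕ → ℕ → Prop
  | refl (i : ℕ) : Reaches π i i
  | step {i j k : ℕ} : Reaches π i j → IsParent π j k → Reaches π i k

/-- the derivation uses the axiom clause `A`: some axiom line carries `A` and the final
line is reachable from it in the proof DAG -/
def UsesAxiom (π : Deriv V) (A : Clause V) : Prop :=
  ∃ i, IsAxiomLine π i ∧ π.clause i = A ∧ Reaches π i (π.length - 1)

/-- input derivation: every resolution step has at least one premise that is an axiom line -/
def Input (π : Deriv V) : Prop :=
  ∀ k i j x, π.just k = some (Sum.inl (i, j, x)) → π.just i = none ∨ π.just j = none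

/-- tree-like: every line is a premise of at most one line -/
def TreeLike (π : Deriv V) : Prop :=
  ∀ i k₁ k₂, IsParent π i k₁ → IsParent π i k₂ → k₁ = k₂

def vars (C : Clause V) : Finset V := C.image Prod.fst

/-- strongly regular: once a variable is used as pivot it never occurs in a later clause -/
def StronglyRegular (π : Deriv V) : Prop :=
  ∀ k i j x, π.just k = some (Sum.inl (i, j, x)) →
    ∀ k', k ≤ k' → k' < π.length → x ∉ vars (π.clause k')

/-- resolution with merge ancestors: every line used as a premise more than once has
an ancestor in the proof DAG that is a merge -/
def RMA (π : Deriv V) : Prop :=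
  ∀ i, (∃ k₁ k₂, k₁ ≠ k₂ ∧ IsParent π i k₁ ∧ IsParent π i k₂) →
    ∃ a, Reaches π a i ∧ IsMergeLine π a

end Deriv

def seqGet {V : Type} (S : List (Deriv V)) (t : ℕ) : Deriv V := S.getD t ⟨[]⟩

def seqLength {V : Type} (S : List (Deriv V)) : ℕ := (S.map Deriv.length).sum

/-- input-structured sequence over axiom set `Ax`: each constituent is a valid input
derivation which may use the final clauses (lemmas) of earlier constituents as axioms;
`w` tells whether weakening is allowed -/
def SeqValid {V : Type} [DecidableEq V] (Ax : Set (Clause V)) (S : List (Deriv V))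
    (w : Bool) : Prop :=
  S ≠ [] ∧ ∀ t < S.length,
    (cond w Deriv.ValidW Deriv.Valid)
        (Ax ∪ {C | ∃ t' < t, C = (seqGet S t').lastClause}) (seqGet S t) ∧
      (seqGet S t).Input

/-- every lemma (last clause of a non-final constituent) is derived by a merge step -/
def MergeLemmas {V : Type} [DecidableEq V] (S : List (Deriv V)) : Prop :=
  ∀ t, t + 1 < S.length → (seqGet S t).IsMergeLine ((seqGet S t).length - 1)

def LocallyRegular {V : Type} [DecidableEq V] (S : List (Deriv V)) : Prop :=
  ∀ t < S.length, (seqGet S t).StronglyRegular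

namespace Stmt3Aux

open Deriv

variable {V : Type} [DecidableEq V]

inductive RT (V : Type) where
  | ax : Clause V → RT V
  | res : RT V → RT V → V → RT V

namespace RT

def conc : RT V → Clause V
  | .ax A => A
  | .res a b x => Deriv.resolve (conc a) (conc b) x

def nodes : RT V → ℕ
  | .ax _ => 1
  | .res a b _ => nodes a + nodes b + 1

def TValid (Ax : Set (Clause V)) : RT V → Prop
  | .ax A => A ∈ Ax
  | .res a b x => TValid Ax a ∧ TValid Ax b ∧ (x, true) ∈ conc a ∧ (x, false) ∈ conc b

def NoMerge : RT V → Prop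
  | .ax _ => True
  | .res a b x => NoMerge a ∧ NoMerge b ∧
      ∀ l ∈ (conc a).erase (x, true), l ∉ (conc b).erase (x, false)

def AMRM : RT V → Prop
  | .ax _ => True
  | .res a b _ => NoMerge a ∧ NoMerge b

def IsAx : RT V → Prop
  | .ax _ => True
  | .res _ _ _ => False

def InputT : RT V → Prop
  | .ax _ => True
  | .res a b _ => InputT a ∧ InputT b ∧ (IsAx a ∨ IsAx b)

set_option linter.unusedSectionVars false in
lemma one_le_nodes (t : RT V) : 1 ≤ nodes t := by
  cases t <;> simp [nodes]

lemma amrm_of_nomerge {t : RT V} (h : NoMerge t) : AMRM t := by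
  cases t with
  | ax A => trivial
  | res a b x => exact ⟨h.1, h.2.1⟩

lemma combine (Ax : Set (Clause V)) :
    ∀ t : RT V, TValid Ax t → NoMerge t →
    ∀ (b : Bool) (x : V) (d : RT V), TValid Ax d → InputT d →
      (x, b) ∈ conc d → (x, !b) ∈ conc t →
    ∃ d', TValid Ax d' ∧ InputT d' ∧ nodes d' ≤ nodes d + nodes t + 1 ∧
      conc d' ⊆ (conc d).erase (x, b) ∪ (conc t).erase (x, !b) := by
  intro t
  induction t with
  | ax B =>
    intro htv _ b x d hdv hdi hxd hxt
    cases b with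
    | true =>
      refine ⟨.res d (.ax B) x, ⟨hdv, htv, hxd, by simpa using hxt⟩,
        ⟨hdi, trivial, Or.inr trivial⟩, by simp only [nodes]; omega, ?_⟩
      simp only [conc, Deriv.resolve]
      exact Finset.Subset.refl _
    | false =>
      refine ⟨.res (.ax B) d x, ⟨htv, hdv, by simpa using hxt, hxd⟩,
        ⟨trivial, hdi, Or.inl trivial⟩, by simp only [nodes]; omega, ?_⟩
      simp only [conc, Deriv.resolve]
      rw [Finset.union_comm]
      exact Finset.Subset.refl _
  | res u1 u2 y ih1 ih2 =>
    intro htv hnm b x d hdv hdi hxd hxt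
    obtain ⟨hv1, hv2, hy1, hy2⟩ := htv
    obtain ⟨hm1, hm2, hdisj⟩ := hnm
    have hxt' : (x, !b) ∈ (conc u1).erase (y, true) ∪ (conc u2).erase (y, false) := hxt
    rcases Finset.mem_union.1 hxt' with hcase | hcase
    · -- pivot literal sits in the left premise of t
      have hnotu2 : (x, !b) ∉ (conc u2).erase (y, false) := hdisj _ hcase
      have hxu1 : (x, !b) ∈ conc u1 := Finset.mem_of_mem_erase hcase
      obtain ⟨g, hgv, hgi, hgn, hgs⟩ := ih1 hv1 hm1 b x d hdv hdi hxd hxu1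
      by_cases hyg : (y, true) ∈ conc g
      · obtain ⟨d', hv', hi', hn', hs'⟩ := ih2 hv2 hm2 true y g hgv hgi hyg (by simpa using hy2)
        refine ⟨d', hv', hi', by simp only [nodes] at *; omega, ?_⟩
        intro l hl
        have hl' := hs' hl
        simp only [Bool.not_true] at hl'
        rcases Finset.mem_union.1 hl' with h | h
        · obtain ⟨hlny, hlg⟩ := Finset.mem_erase.1 h
          rcases Finset.mem_union.1 (hgs hlg) with h2 | h2
          · exact Finset.mem_union_left _ h2
          · obtain ⟨hlnx, hlu1⟩ := Finset.mem_erase.1 h2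
            refine Finset.mem_union_right _ (Finset.mem_erase.2 ⟨hlnx, ?_⟩)
            exact Finset.mem_union_left _ (Finset.mem_erase.2 ⟨hlny, hlu1⟩)
        · obtain ⟨hlny, hlu2⟩ := Finset.mem_erase.1 h
          have hlnx : l ≠ (x, !b) := by
            rintro rfl; exact hnotu2 (Finset.mem_erase.2 ⟨hlny, hlu2⟩)
          refine Finset.mem_union_right _ (Finset.mem_erase.2 ⟨hlnx, ?_⟩)
          exact Finset.mem_union_right _ (Finset.mem_erase.2 ⟨hlny, hlu2⟩)
      · refine ⟨g, hgv, hgi, by simp only [nodes] at *; omega, ?_⟩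
        intro l hl
        rcases Finset.mem_union.1 (hgs hl) with h2 | h2
        · exact Finset.mem_union_left _ h2
        · obtain ⟨hlnx, hlu1⟩ := Finset.mem_erase.1 h2
          have hlny : l ≠ (y, true) := by rintro rfl; exact hyg hl
          refine Finset.mem_union_right _ (Finset.mem_erase.2 ⟨hlnx, ?_⟩)
          exact Finset.mem_union_left _ (Finset.mem_erase.2 ⟨hlny, hlu1⟩)
    · -- pivot literal sits in the right premise of t
      have hnotu1 : (x, !b) ∉ (conc u1).erase (y, true) := fun h => hdisj _ h hcase
      have hxu2 : (x, !b) ∈ conc u2 := Finset.mem_of_mem_erase hcase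
      obtain ⟨g, hgv, hgi, hgn, hgs⟩ := ih2 hv2 hm2 b x d hdv hdi hxd hxu2
      by_cases hyg : (y, false) ∈ conc g
      · obtain ⟨d', hv', hi', hn', hs'⟩ := ih1 hv1 hm1 false y g hgv hgi hyg (by simpa using hy1)
        refine ⟨d', hv', hi', by simp only [nodes] at *; omega, ?_⟩
        intro l hl
        have hl' := hs' hl
        simp only [Bool.not_false] at hl'
        rcases Finset.mem_union.1 hl' with h | h
        · obtain ⟨hlny, hlg⟩ := Finset.mem_erase.1 h
          rcases Finset.mem_union.1 (hgs hlg) with h2 | h2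
          · exact Finset.mem_union_left _ h2
          · obtain ⟨hlnx, hlu2⟩ := Finset.mem_erase.1 h2
            refine Finset.mem_union_right _ (Finset.mem_erase.2 ⟨hlnx, ?_⟩)
            exact Finset.mem_union_right _ (Finset.mem_erase.2 ⟨hlny, hlu2⟩)
        · obtain ⟨hlny, hlu1⟩ := Finset.mem_erase.1 h
          have hlnx : l ≠ (x, !b) := by
            rintro rfl; exact hnotu1 (Finset.mem_erase.2 ⟨hlny, hlu1⟩)
          refine Finset.mem_union_right _ (Finset.mem_erase.2 ⟨hlnx, ?_⟩)
          exact Finset.mem_union_left _ (Finset.mem_erase.2 ⟨hlny, hlu1⟩)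
      · refine ⟨g, hgv, hgi, by simp only [nodes] at *; omega, ?_⟩
        intro l hl
        rcases Finset.mem_union.1 (hgs hl) with h2 | h2
        · exact Finset.mem_union_left _ h2
        · obtain ⟨hlnx, hlu2⟩ := Finset.mem_erase.1 h2
          have hlny : l ≠ (y, false) := by rintro rfl; exact hyg hl
          refine Finset.mem_union_right _ (Finset.mem_erase.2 ⟨hlnx, ?_⟩)
          exact Finset.mem_union_right _ (Finset.mem_erase.2 ⟨hlny, hlu2⟩)

lemma toInput (Ax : Set (Clause V)) :
    ∀ t : RT V, TValid Ax t → AMRM t →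
    ∃ d, TValid Ax d ∧ InputT d ∧ nodes d ≤ nodes t ∧ conc d ⊆ conc t := by
  intro t
  induction t with
  | ax A => exact fun h _ => ⟨.ax A, h, trivial, le_refl _, Finset.Subset.refl _⟩
  | res t1 t2 x ih1 ih2 =>
    rintro ⟨hv1, hv2, hx1, hx2⟩ ⟨hm1, hm2⟩
    obtain ⟨d1, hd1v, hd1i, hd1n, hd1s⟩ := ih1 hv1 (amrm_of_nomerge hm1)
    by_cases hx : (x, true) ∈ conc d1
    · obtain ⟨d', hv', hi', hn', hs'⟩ :=
        combine Ax t2 hv2 hm2 true x d1 hd1v hd1i hx (by simpa using hx2)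
      refine ⟨d', hv', hi', by simp only [nodes] at *; omega, ?_⟩
      intro l hl
      have hl' := hs' hl
      simp only [Bool.not_true] at hl'
      show l ∈ (conc t1).erase (x, true) ∪ (conc t2).erase (x, false)
      rcases Finset.mem_union.1 hl' with h | h
      · obtain ⟨hlnx, hld⟩ := Finset.mem_erase.1 h
        exact Finset.mem_union_left _ (Finset.mem_erase.2 ⟨hlnx, hd1s hld⟩)
      · exact Finset.mem_union_right _ h
    · refine ⟨d1, hd1v, hd1i, by simp only [nodes] at *; omega, ?_⟩
      intro l hl
      show l ∈ (conc t1).erase (x, true) ∪ (conc t2).erase (x, false)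
      have hlnx : l ≠ (x, true) := by rintro rfl; exact hx hl
      exact Finset.mem_union_left _ (Finset.mem_erase.2 ⟨hlnx, hd1s hl⟩)

end RT
end Stmt3Aux
namespace Stmt3Aux
open Deriv RT

variable {V : Type} [DecidableEq V]

lemma resolve_self (A : Clause V) (x : V) : Deriv.resolve A A x = A := by
  ext l
  simp only [Deriv.resolve, Finset.mem_union, Finset.mem_erase]
  constructor
  · rintro (⟨_, h⟩ | ⟨_, h⟩) <;> exact h
  · intro hl
    by_cases h : l = (x, true)
    · subst h; exact Or.inr ⟨by simp, hl⟩
    · exact Or.inl ⟨h, hl⟩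

lemma just_out (π : Deriv V) {k : ℕ} (hk : π.length ≤ k) : π.just k = none := by
  unfold Deriv.just
  rw [List.getD_eq_default _ _ hk]

lemma validline_none {Ax : Set (Clause V)} {w : Bool} {π : Deriv V} {k : ℕ}
    (h : Deriv.ValidLine Ax w π k) (hj : π.just k = none) : π.clause k ∈ Ax := by
  unfold Deriv.ValidLine at h
  rw [hj] at h
  exact h

lemma validline_inl {Ax : Set (Clause V)} {w : Bool} {π : Deriv V} {k i j : ℕ} {x : V}
    (h : Deriv.ValidLine Ax w π k) (hj : π.just k = some (Sum.inl (i, j, x))) :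
    i < k ∧ j < k ∧ (x, true) ∈ π.clause i ∧ (x, false) ∈ π.clause j ∧
      π.clause k = Deriv.resolve (π.clause i) (π.clause j) x := by
  unfold Deriv.ValidLine at h
  rw [hj] at h
  exact h

lemma validline_inr {Ax : Set (Clause V)} {π : Deriv V} {k i : ℕ}
    (h : Deriv.ValidLine Ax false π k) (hj : π.just k = some (Sum.inr i)) : False := by
  unfold Deriv.ValidLine at h
  rw [hj] at h
  simpa using h.1

lemma parent_lt {π : Deriv V} {Ax : Set (Clause V)} (hv : π.Valid Ax) {a b : ℕ}
    (h : IsParent π a b) : a < b := by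
  by_cases hb : b < π.length
  · have hb' := hv.2 b hb
    rcases h with ⟨j, x, h | h⟩ | h
    · exact (validline_inl hb' h).1
    · exact (validline_inl hb' h).2.1
    · exact (validline_inr hb' h).elim
  · rcases h with ⟨j, x, h | h⟩ | h <;> rw [just_out π (le_of_not_gt hb)] at h <;>
      exact absurd h (by simp)

lemma reaches_le {π : Deriv V} {Ax : Set (Clause V)} (hv : π.Valid Ax) {m k : ℕ}
    (h : Reaches π m k) : m ≤ k := by
  induction h with
  | refl => exact le_refl _
  | step _ p ih => exact le_trans ih (le_of_lt (parent_lt hv p))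

lemma reaches_inv {π : Deriv V} {a b : ℕ} (h : Reaches π a b) :
    a = b ∨ ∃ c, IsParent π a c ∧ Reaches π c b := by
  induction h with
  | refl => exact Or.inl rfl
  | step _ p ih =>
    rcases ih with rfl | ⟨c, pc, hc⟩
    · exact Or.inr ⟨_, p, Reaches.refl _⟩
    · exact Or.inr ⟨c, pc, Reaches.step hc p⟩

lemma reaches_total {π : Deriv V} (ht : π.TreeLike) {m i j : ℕ}
    (h1 : Reaches π m i) (h2 : Reaches π m j) : Reaches π i j ∨ Reaches π j i := by
  induction h2 with
  | refl => exact Or.inr h1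
  | step _ p ih =>
    rcases ih with hij' | hj'i
    · exact Or.inl (Reaches.step hij' p)
    · rcases reaches_inv hj'i with rfl | ⟨c, pc, hc⟩
      · exact Or.inl (Reaches.step (Reaches.refl _) p)
      · rw [ht _ _ _ pc p] at hc
        exact Or.inr hc

lemma no_common {π : Deriv V} {Ax : Set (Clause V)} (hv : π.Valid Ax) (ht : π.TreeLike)
    {i j k m : ℕ} (hij : i ≠ j) (pi : IsParent π i k) (pj : IsParent π j k)
    (hmi : Reaches π m i) (hmj : Reaches π m j) : False := by
  rcases reaches_total ht hmi hmj with h | h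
  · rcases reaches_inv h with rfl | ⟨c, pc, hc⟩
    · exact hij rfl
    · rw [ht _ _ _ pc pi] at hc
      exact absurd (reaches_le hv hc) (not_le.2 (parent_lt hv pj))
  · rcases reaches_inv h with rfl | ⟨c, pc, hc⟩
    · exact hij rfl
    · rw [ht _ _ _ pc pj] at hc
      exact absurd (reaches_le hv hc) (not_le.2 (parent_lt hv pi))

open Classical in
noncomputable def Sset (π : Deriv V) (k : ℕ) : Finset ℕ :=
  (Finset.range (k + 1)).filter (fun m => Reaches π m k)

open Classical in
lemma mem_Sset {π : Deriv V} {Ax : Set (Clause V)} (hv : π.Valid Ax) {m k : ℕ} :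
    m ∈ Sset π k ↔ Reaches π m k := by
  simp only [Sset, Finset.mem_filter, Finset.mem_range]
  exact ⟨fun h => h.2, fun h => ⟨Nat.lt_succ_of_le (reaches_le hv h), h⟩⟩

open Classical in
lemma Sset_card_le (π : Deriv V) (k : ℕ) : (Sset π k).card ≤ k + 1 := by
  have h : Sset π k ⊆ Finset.range (k + 1) := Finset.filter_subset _ _
  simpa using Finset.card_le_card h

def extract (π : Deriv V) : ℕ → ℕ → RT V
  | 0, k => .ax (π.clause k)
  | n + 1, k =>
    match π.just k with
    | some (Sum.inl (i, j, x)) =>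
        if i = j then extract π n i else .res (extract π n i) (extract π n j) x
    | _ => .ax (π.clause k)

lemma extract_spec {π : Deriv V} {Ax : Set (Clause V)} (hv : π.Valid Ax) (ht : π.TreeLike)
    (hm : ∀ k, π.IsMergeLine k → k = π.length - 1) :
    ∀ n k, k ≤ n → k < π.length →
      conc (extract π n k) = π.clause k ∧ TValid Ax (extract π n k) ∧
      AMRM (extract π n k) ∧ (k < π.length - 1 → NoMerge (extract π n k)) ∧
      nodes (extract π n k) ≤ (Sset π k).card := by
  intro n
  induction n with
  | zero =>
    intro k hk0 hkL
    have hk : k = 0 := by omega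
    subst hk
    have h0 := hv.2 0 hkL
    rcases hj : π.just 0 with _ | ⟨⟨i, j, x⟩⟩ | i
    · refine ⟨rfl, validline_none h0 hj, trivial, fun _ => trivial, ?_⟩
      have hmem : 0 ∈ Sset π 0 := (mem_Sset hv).2 (Reaches.refl 0)
      simpa [extract, nodes] using Finset.card_pos.2 ⟨0, hmem⟩
    · exact absurd (validline_inl h0 hj).1 (by omega)
    · exact (validline_inr h0 hj).elim
  | succ n ih =>
    intro k hkn hkL
    have hvk := hv.2 k hkL
    rcases hj : π.just k with _ | ⟨⟨i, j, x⟩⟩ | i0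
    · -- axiom line
      refine ⟨by simp [extract, hj, conc], ?_, ?_, fun _ => ?_, ?_⟩
      · simpa [extract, hj, TValid] using validline_none hvk hj
      · simp [extract, hj, AMRM]
      · simp [extract, hj, NoMerge]
      · have hmem : k ∈ Sset π k := (mem_Sset hv).2 (Reaches.refl k)
        simpa [extract, hj, nodes] using Finset.card_pos.2 ⟨k, hmem⟩
    · -- resolution line
      obtain ⟨hik, hjk, hxi, hxj, hck⟩ := validline_inl hvk hj
      have hiL : i < π.length := lt_trans hik hkL
      have hjL : j < π.length := lt_trans hjk hkL
      have hiL' : i < π.length - 1 := by omega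
      have hjL' : j < π.length - 1 := by omega
      obtain ⟨Pi1, Pi2, Pi3, Pi4, Pi5⟩ := ih i (by omega) hiL
      obtain ⟨Pj1, Pj2, Pj3, Pj4, Pj5⟩ := ih j (by omega) hjL
      have pi : IsParent π i k := Or.inl ⟨j, x, Or.inl hj⟩
      have pj : IsParent π j k := Or.inl ⟨i, x, Or.inr hj⟩
      have hSi : Sset π i ⊆ Sset π k := by
        intro m hmem
        exact (mem_Sset hv).2 (Reaches.step ((mem_Sset hv).1 hmem) pi)
      have hSj : Sset π j ⊆ Sset π k := by
        intro m hmem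
        exact (mem_Sset hv).2 (Reaches.step ((mem_Sset hv).1 hmem) pj)
      by_cases hij : i = j
      · subst hij
        have he : extract π (n + 1) k = extract π n i := by
          simp [extract, hj]
        rw [he]
        have hcc : π.clause k = π.clause i := by rw [hck, resolve_self]
        exact ⟨by rw [Pi1, hcc], Pi2, amrm_of_nomerge (Pi4 hiL'), fun _ => Pi4 hiL',
          le_trans Pi5 (Finset.card_le_card hSi)⟩
      · have he : extract π (n + 1) k = .res (extract π n i) (extract π n j) x := by
          simp [extract, hj, hij]
        rw [he]
        have hconc : conc (.res (extract π n i) (extract π n j) x) = π.clause k := by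
          simp only [conc, Pi1, Pj1]
          exact hck.symm
        have hdisjC : k < π.length - 1 →
            ∀ l ∈ (conc (extract π n i)).erase (x, true),
              l ∉ (conc (extract π n j)).erase (x, false) := by
          intro hk' l hl1 hl2
          rw [Pi1] at hl1
          rw [Pj1] at hl2
          have hmk : π.IsMergeLine k := ⟨i, j, x, hj, l, hl1, hl2⟩
          have := hm k hmk
          omega
        refine ⟨hconc, ⟨Pi2, Pj2, ?_, ?_⟩, ⟨Pi4 hiL', Pj4 hjL'⟩,
          fun hk' => ⟨Pi4 hiL', Pj4 hjL', hdisjC hk'⟩, ?_⟩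
        · rw [Pi1]; exact hxi
        · rw [Pj1]; exact hxj
        · have hdisj : Disjoint (Sset π i) (Sset π j) := by
            rw [Finset.disjoint_left]
            intro m hmi hmj
            exact no_common hv ht hij pi pj ((mem_Sset hv).1 hmi) ((mem_Sset hv).1 hmj)
          have hknotin : k ∉ Sset π i ∪ Sset π j := by
            intro hk
            rcases Finset.mem_union.1 hk with h | h
            · exact absurd (reaches_le hv ((mem_Sset hv).1 h)) (by omega)
            · exact absurd (reaches_le hv ((mem_Sset hv).1 h)) (by omega)
          have hsub : insert k (Sset π i ∪ Sset π j) ⊆ Sset π k := by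
            intro m hmem
            rcases Finset.mem_insert.1 hmem with rfl | hmem
            · exact (mem_Sset hv).2 (Reaches.refl _)
            · rcases Finset.mem_union.1 hmem with h | h
              · exact hSi h
              · exact hSj h
          have h1 : (Sset π i ∪ Sset π j).card = (Sset π i).card + (Sset π j).card :=
            Finset.card_union_of_disjoint hdisj
          have h2 : (insert k (Sset π i ∪ Sset π j)).card = (Sset π i ∪ Sset π j).card + 1 :=
            Finset.card_insert_of_notMem hknotin
          have h3 := Finset.card_le_card hsub
          simp only [nodes]
          omega
    · -- weakening line: impossible
      exact (validline_inr hvk hj).elim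

end Stmt3Aux
namespace Stmt3Aux
open RT

variable {V : Type} [DecidableEq V]

def flat : ℕ → RT V → List (Clause V × Option (Just V))
  | _, .ax A => [(A, none)]
  | o, .res a b x =>
      flat o a ++ (flat (o + nodes a) b ++
        [(Deriv.resolve (conc a) (conc b) x,
          some (Sum.inl (o + nodes a - 1, o + nodes a + nodes b - 1, x)))])

lemma flat_length : ∀ (t : RT V) (o : ℕ), (flat o t).length = nodes t := by
  intro t
  induction t with
  | ax A => intro o; simp [flat, nodes]
  | res a b x iha ihb => intro o; simp [flat, nodes, iha, ihb]; omega

lemma clause_block (P L S : List (Clause V × Option (Just V))) (m : ℕ) (hm : m < L.length) :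
    Deriv.clause ⟨P ++ (L ++ S)⟩ (P.length + m) = (L.getD m (∅, none)).1 := by
  show ((P ++ (L ++ S)).getD (P.length + m) (∅, none)).1 = _
  rw [List.getD_append_right _ _ _ _ (by omega), Nat.add_sub_cancel_left,
    List.getD_append _ _ _ _ hm]

lemma just_block (P L S : List (Clause V × Option (Just V))) (m : ℕ) (hm : m < L.length) :
    Deriv.just ⟨P ++ (L ++ S)⟩ (P.length + m) = (L.getD m (∅, none)).2 := by
  show ((P ++ (L ++ S)).getD (P.length + m) (∅, none)).2 = _
  rw [List.getD_append_right _ _ _ _ (by omega), Nat.add_sub_cancel_left,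
    List.getD_append _ _ _ _ hm]

lemma flat_getD_last_res (a b : RT V) (x : V) (o : ℕ) :
    (flat o (.res a b x)).getD (nodes a + nodes b) (∅, none) =
      (Deriv.resolve (conc a) (conc b) x,
        some (Sum.inl (o + nodes a - 1, o + nodes a + nodes b - 1, x))) := by
  show (flat o a ++ (flat (o + nodes a) b ++ _)).getD _ _ = _
  rw [List.getD_append_right _ _ _ _ (by rw [flat_length]; omega)]
  rw [flat_length]
  rw [List.getD_append_right _ _ _ _ (by rw [flat_length]; omega)]
  rw [flat_length]
  simp

lemma flat_last_clause : ∀ (t : RT V) (o : ℕ) (P S : List (Clause V × Option (Just V))),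
    P.length = o → Deriv.clause ⟨P ++ (flat o t ++ S)⟩ (o + (nodes t - 1)) = conc t := by
  intro t o P S hP
  subst hP
  cases t with
  | ax A =>
    have h := clause_block P (flat P.length (.ax A)) S 0 (by rw [flat_length]; simp [nodes])
    simpa [flat, nodes, conc] using h
  | res a b x =>
    have h := clause_block P (flat P.length (.res a b x)) S (nodes a + nodes b)
      (by rw [flat_length]; simp [nodes])
    rw [flat_getD_last_res] at h
    have he : nodes (RT.res a b x) - 1 = nodes a + nodes b := by simp [nodes]
    rw [he, h]
    rfl

lemma flat_last_just_ax (A : Clause V) (o : ℕ) (P S : List (Clause V × Option (Just V)))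
    (hP : P.length = o) : Deriv.just ⟨P ++ (flat o (.ax A) ++ S)⟩ o = none := by
  subst hP
  have h := just_block P (flat P.length (.ax A)) S 0 (by rw [flat_length]; simp [nodes])
  simpa [flat] using h

lemma flat_last_just_res (a b : RT V) (x : V) (o : ℕ)
    (P S : List (Clause V × Option (Just V))) (hP : P.length = o) :
    Deriv.just ⟨P ++ (flat o (.res a b x) ++ S)⟩ (o + (nodes a + nodes b)) =
      some (Sum.inl (o + nodes a - 1, o + nodes a + nodes b - 1, x)) := by
  subst hP
  have h := just_block P (flat P.length (.res a b x)) S (nodes a + nodes b)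
    (by rw [flat_length]; simp [nodes])
  rw [flat_getD_last_res] at h
  exact h

lemma flat_valid (Ax : Set (Clause V)) : ∀ (t : RT V), TValid Ax t →
    ∀ (o : ℕ) (P S : List (Clause V × Option (Just V))), P.length = o →
    ∀ m < nodes t, Deriv.ValidLine Ax false ⟨P ++ (flat o t ++ S)⟩ (o + m) := by
  intro t
  induction t with
  | ax A =>
    intro htv o P S hP m hm
    have hm0 : m = 0 := Nat.lt_one_iff.1 hm
    subst hm0
    have hj : Deriv.just ⟨P ++ (flat o (.ax A) ++ S)⟩ (o + 0) = none := by
      simpa using flat_last_just_ax A o P S hP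
    have hc : Deriv.clause ⟨P ++ (flat o (.ax A) ++ S)⟩ (o + 0) = A := by
      have := flat_last_clause (.ax A) o P S hP
      simpa [nodes, conc] using this
    unfold Deriv.ValidLine
    rw [hj, hc]
    exact htv
  | res a b x iha ihb =>
    intro htv o P S hP m hm
    obtain ⟨hva, hvb, hxa, hxb⟩ := htv
    have hlist : P ++ (flat o (.res a b x) ++ S) =
        P ++ (flat o a ++ ((flat (o + nodes a) b ++
          [(Deriv.resolve (conc a) (conc b) x,
            some (Sum.inl (o + nodes a - 1, o + nodes a + nodes b - 1, x)))]) ++ S)) := by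
      simp [flat, List.append_assoc]
    have hlist2 : P ++ (flat o (.res a b x) ++ S) =
        (P ++ flat o a) ++ (flat (o + nodes a) b ++
          ([(Deriv.resolve (conc a) (conc b) x,
            some (Sum.inl (o + nodes a - 1, o + nodes a + nodes b - 1, x)))] ++ S)) := by
      simp [flat, List.append_assoc]
    by_cases hma : m < nodes a
    · rw [hlist]
      exact iha hva o P _ hP m hma
    · by_cases hmb : m < nodes a + nodes b
      · have hidx : o + m = (o + nodes a) + (m - nodes a) := by omega
        rw [hlist2, hidx]
        exact ihb hvb (o + nodes a) (P ++ flat o a) _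
          (by simp [hP, flat_length]) (m - nodes a) (by omega)
      · have hm' : m = nodes a + nodes b := by
          have : m < nodes a + nodes b + 1 := by simpa [nodes] using hm
          omega
        subst hm'
        have hj := flat_last_just_res a b x o P S hP
        have hca : Deriv.clause ⟨P ++ (flat o (.res a b x) ++ S)⟩ (o + (nodes a - 1)) = conc a := by
          rw [hlist]
          exact flat_last_clause a o P _ hP
        have hcb : Deriv.clause ⟨P ++ (flat o (.res a b x) ++ S)⟩
            ((o + nodes a) + (nodes b - 1)) = conc b := by
          rw [hlist2]
          exact flat_last_clause b (o + nodes a) (P ++ flat o a) _ (by simp [hP, flat_length])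
        have hck : Deriv.clause ⟨P ++ (flat o (.res a b x) ++ S)⟩ (o + (nodes a + nodes b)) =
            Deriv.resolve (conc a) (conc b) x := by
          have h := clause_block P (flat o (.res a b x)) S (nodes a + nodes b)
            (by rw [flat_length]; simp [nodes])
          rw [flat_getD_last_res] at h
          rw [hP] at h
          exact h
        have h1 : 1 ≤ nodes a := one_le_nodes a
        have h2 : 1 ≤ nodes b := one_le_nodes b
        unfold Deriv.ValidLine
        rw [hj]
        refine ⟨by omega, by omega, ?_, ?_, ?_⟩
        · have : o + nodes a - 1 = o + (nodes a - 1) := by omega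
          rw [this, hca]
          exact hxa
        · have : o + nodes a + nodes b - 1 = (o + nodes a) + (nodes b - 1) := by omega
          rw [this, hcb]
          exact hxb
        · have e1 : o + nodes a - 1 = o + (nodes a - 1) := by omega
          have e2 : o + nodes a + nodes b - 1 = (o + nodes a) + (nodes b - 1) := by omega
          rw [hck, e1, e2, hca, hcb]

lemma flat_input : ∀ (t : RT V), InputT t →
    ∀ (o : ℕ) (P S : List (Clause V × Option (Just V))), P.length = o →
    ∀ k, o ≤ k → k < o + nodes t →
    ∀ i j x, Deriv.just ⟨P ++ (flat o t ++ S)⟩ k = some (Sum.inl (i, j, x)) →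
      Deriv.just ⟨P ++ (flat o t ++ S)⟩ i = none ∨
        Deriv.just ⟨P ++ (flat o t ++ S)⟩ j = none := by
  intro t
  induction t with
  | ax A =>
    intro _ o P S hP k hk1 hk2 i j x hjk
    have hn1 : nodes (RT.ax A) = 1 := rfl
    have hk : k = o := by omega
    subst hk
    rw [flat_last_just_ax A k P S hP] at hjk
    exact absurd hjk (by simp)
  | res a b x0 iha ihb =>
    intro hti o P S hP k hk1 hk2 i j x hjk
    obtain ⟨hia, hib, hax⟩ := hti
    have hlist : P ++ (flat o (.res a b x0) ++ S) =
        P ++ (flat o a ++ ((flat (o + nodes a) b ++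
          [(Deriv.resolve (conc a) (conc b) x0,
            some (Sum.inl (o + nodes a - 1, o + nodes a + nodes b - 1, x0)))]) ++ S)) := by
      simp [flat, List.append_assoc]
    have hlist2 : P ++ (flat o (.res a b x0) ++ S) =
        (P ++ flat o a) ++ (flat (o + nodes a) b ++
          ([(Deriv.resolve (conc a) (conc b) x0,
            some (Sum.inl (o + nodes a - 1, o + nodes a + nodes b - 1, x0)))] ++ S)) := by
      simp [flat, List.append_assoc]
    by_cases hka : k < o + nodes a
    · rw [hlist] at hjk ⊢
      exact iha hia o P _ hP k hk1 hka i j x hjk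
    · by_cases hkb : k < o + nodes a + nodes b
      · rw [hlist2] at hjk ⊢
        exact ihb hib (o + nodes a) (P ++ flat o a) _ (by simp [hP, flat_length]) k
          (by omega) (by omega) i j x hjk
      · have hk : k = o + (nodes a + nodes b) := by
          simp only [nodes] at hk2; omega
        subst hk
        rw [flat_last_just_res a b x0 o P S hP] at hjk
        simp only [Option.some.injEq, Sum.inl.injEq, Prod.mk.injEq] at hjk
        obtain ⟨hi, hj2, _⟩ := hjk
        rcases hax with ha | hb
        · cases a with
          | ax A =>
            left
            have hio : i = o := by simp only [nodes] at hi; omega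
            rw [hio, hlist]
            exact flat_last_just_ax A o P _ hP
          | res _ _ _ => exact ha.elim
        · cases b with
          | ax B =>
            right
            have hjo : j = o + nodes a := by simp only [nodes] at hj2; omega
            rw [hjo, hlist2]
            exact flat_last_just_ax B (o + nodes a) (P ++ flat o a) _ (by simp [hP, flat_length])
          | res _ _ _ => exact hb.elim
    
end Stmt3Aux
namespace Stmt3Aux
open RT

variable {V : Type} [DecidableEq V]

lemma flat_deriv (Ax : Set (Clause V)) (t : RT V) (hv : TValid Ax t) (hi : InputT t) :
    ∃ π' : Deriv V, π'.Valid Ax ∧ π'.Input ∧ π'.lastClause = conc t ∧ π'.length = nodes t := by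
  refine ⟨⟨[] ++ (flat 0 t ++ [])⟩, ⟨?_, ?_⟩, ?_, ?_, ?_⟩
  · show 0 < ([] ++ (flat 0 t ++ [])).length
    simp [flat_length]
    exact lt_of_lt_of_le Nat.zero_lt_one (one_le_nodes t)
  · intro k hk
    have hk' : k < nodes t := by
      simpa [Deriv.length, flat_length] using hk
    simpa using flat_valid Ax t hv 0 [] [] rfl k hk'
  · intro k i j x hjk
    by_cases hk : k < nodes t
    · exact flat_input t hi 0 [] [] rfl k (Nat.zero_le k) (by omega) i j x hjk
    · rw [just_out _ (by simpa [Deriv.length, flat_length] using not_lt.1 hk)] at hjk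
      exact absurd hjk (by simp)
  · show Deriv.clause ⟨[] ++ (flat 0 t ++ [])⟩
        (Deriv.length ⟨[] ++ (flat 0 t ++ [])⟩ - 1) = conc t
    have hlen : Deriv.length (⟨[] ++ (flat 0 t ++ [])⟩ : Deriv V) = nodes t := by
      simp [Deriv.length, flat_length]
    rw [hlen]
    have h := flat_last_clause t 0 [] [] rfl
    have e : nodes t - 1 = 0 + (nodes t - 1) := by omega
    rw [e]
    exact h
  · simp [Deriv.length, flat_length]

end Stmt3Aux
theorem stmt3 {V : Type} [DecidableEq V] (Ax : Set (Clause V)) (π : Deriv V)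
    (C : Clause V) (L : ℕ) (hv : π.Valid Ax) (ht : π.TreeLike)
    (hm : ∀ k, π.IsMergeLine k → k = π.length - 1)
    (hC : π.lastClause = C) (hL : π.length = L) :
    ∃ C' ⊆ C, ∃ π' : Deriv V, π'.Valid Ax ∧ π'.Input ∧ π'.lastClause = C' ∧
      π'.length ≤ L := by
  subst hL
  subst hC
  have hL1 : 1 ≤ π.length := hv.1
  obtain ⟨h1, h2, h3, _, h5⟩ :=
    Stmt3Aux.extract_spec hv ht hm (π.length - 1) (π.length - 1) le_rfl (by omega)
  obtain ⟨d, hdv, hdi, hdn, hds⟩ :=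
    Stmt3Aux.RT.toInput Ax (Stmt3Aux.extract π (π.length - 1) (π.length - 1)) h2 h3
  obtain ⟨π', hπv, hπi, hπl, hπn⟩ := Stmt3Aux.flat_deriv Ax d hdv hdi
  have hsub : Stmt3Aux.RT.conc d ⊆ π.lastClause := by
    rw [Deriv.lastClause, ← h1]
    exact hds
  refine ⟨Stmt3Aux.RT.conc d, hsub, π', hπv, hπi, hπl, ?_⟩
  have hcard : (Stmt3Aux.Sset π (π.length - 1)).card ≤ π.length - 1 + 1 :=
    Stmt3Aux.Sset_card_le π (π.length - 1)
  omega
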